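/- arXiv:1407.6283 — 2 statements merged into one kernel-verified Lean document; each statement's English description precedes it below -/
import Mathlib

section
/- If Π̃ = 𝔘̂, then every identity Y-sequence d ∈ Υ belongs to WDom_Υ(𝔘). -/
universe u

namespace Wh

variable {X : Type u}

/-- The set of symbols `(ᵘr)^ε` for a presentation with relators `rels`:
`u` is a word of the free group, `r` a relator and `eps` the sign (`true` for `+1`). -/
structure Sym (X : Type u) (rels : Set (FreeGroup X)) where
  u : FreeGroup X
  r : rels
  eps : Bool

variable {rels : Set (FreeGroup X)}

/-- The formal inverse `(ᵘr)^{-ε}` of a symbol `(ᵘr)^ε`. -/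
def Sym.symInv (a : Sym X rels) : Sym X rels := ⟨a.u, a.r, !a.eps⟩

/-- `θ((ᵘr)^ε) = u r^ε u⁻¹`. -/
def Sym.theta (a : Sym X rels) : FreeGroup X :=
  a.u * (if a.eps then (a.r : FreeGroup X) else (a.r : FreeGroup X)⁻¹) * a.u⁻¹

/-- The conjugate `ᵛ((ᵘr)^ε) = (^{vu}r)^ε`. -/
def Sym.conj (v : FreeGroup X) (a : Sym X rels) : Sym X rels := ⟨v * a.u, a.r, a.eps⟩

/-- The defining relations of the monoid `Υ` : `a ⬝ b = (^{θ(a)}b) ⬝ a`. -/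
def upsRel (rels : Set (FreeGroup X)) :
    FreeMonoid (Sym X rels) → FreeMonoid (Sym X rels) → Prop := fun x y =>
  ∃ a b : Sym X rels, x = FreeMonoid.of a * FreeMonoid.of b ∧
    y = FreeMonoid.of (Sym.conj (Sym.theta a) b) * FreeMonoid.of a

/-- The congruence on the free monoid on `Z` generated by the defining relations of `Υ`. -/
def upsCon (rels : Set (FreeGroup X)) : Con (FreeMonoid (Sym X rels)) := conGen (upsRel rels)

/-- The monoid `Υ` presented on `Z` by the relations `a ⬝ b = (^{θ(a)}b) ⬝ a`. -/
abbrev Ups (rels : Set (FreeGroup X)) := (upsCon rels).Quotient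

/-- The canonical epimorphism `σ : FM(Z) → Υ`. -/
def sigma (rels : Set (FreeGroup X)) : FreeMonoid (Sym X rels) →* Ups rels := (upsCon rels).mk'

/-- The submonoid `𝔘` of `Υ` generated by the elements `σ(a)σ(a⁻¹)`, `a ∈ Z`. -/
def UU (rels : Set (FreeGroup X)) : Submonoid (Ups rels) :=
  Submonoid.closure
    {x | ∃ a : Sym X rels, x = sigma rels (FreeMonoid.of a * FreeMonoid.of a.symInv)}

/-- The monoid homomorphism `θ̄ : Υ → F` induced by `θ`. -/
def thetaBar (rels : Set (FreeGroup X)) : Ups rels →* FreeGroup X :=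
  (upsCon rels).lift (FreeMonoid.lift Sym.theta) (by
    apply Con.conGen_le.2
    rintro x y ⟨a, b, rfl, rfl⟩
    simp only [Con.ker_rel, map_mul, FreeMonoid.lift_eval_of]
    simp only [Sym.theta, Sym.conj]
    group)

/-- The relators of the group `𝒢(Υ)` : `a ⬝ b ⬝ ι((^{θ(a)}b) ⬝ a)`. -/
def grels (rels : Set (FreeGroup X)) : Set (FreeGroup (Sym X rels)) :=
  {x | ∃ a b : Sym X rels, x = FreeGroup.of a * FreeGroup.of b *
      (FreeGroup.of (Sym.conj (Sym.theta a) b) * FreeGroup.of a)⁻¹}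

/-- The universal enveloping group `𝒢(Υ)`. -/
abbrev GUps (rels : Set (FreeGroup X)) := PresentedGroup (grels rels)

/-- The canonical monoid homomorphism `μ : Υ → 𝒢(Υ)`. -/
def mu (rels : Set (FreeGroup X)) : Ups rels →* GUps rels :=
  (upsCon rels).lift (FreeMonoid.lift fun a => (PresentedGroup.of a : GUps rels)) (by
    apply Con.conGen_le.2
    rintro x y ⟨a, b, rfl, rfl⟩
    simp only [Con.ker_rel, map_mul, FreeMonoid.lift_eval_of]
    have h2 : (QuotientGroup.mk (FreeGroup.of a * FreeGroup.of b *
        (FreeGroup.of (Sym.conj (Sym.theta a) b) * FreeGroup.of a)⁻¹) : GUps rels) = 1 :=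
      (QuotientGroup.eq_one_iff _).2 (Subgroup.subset_normalClosure ⟨a, b, rfl⟩)
    rw [QuotientGroup.mk_mul, QuotientGroup.mk_inv, QuotientGroup.mk_mul,
      QuotientGroup.mk_mul, mul_inv_eq_one] at h2
    exact h2)

/-- The subgroup `𝔘̂` of `𝒢(Υ)` generated by `μ(𝔘)`. -/
def UUhat (rels : Set (FreeGroup X)) : Subgroup (GUps rels) :=
  Subgroup.closure (mu rels '' (UU rels : Set (Ups rels)))

/-- The group homomorphism `θ̃ : 𝒢(Υ) → F` induced by `θ`. -/
def thetaTilde (rels : Set (FreeGroup X)) : GUps rels →* FreeGroup X :=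
  PresentedGroup.toGroup (f := Sym.theta) (by
    rintro x ⟨a, b, rfl⟩
    simp only [map_mul, map_inv, FreeGroup.lift_apply_of]
    simp only [Sym.theta, Sym.conj]
    group)

/-- Peiffer equivalence `~_𝔘` on `Υ` : the equivalence relation generated by the pairs
`(x, x ⬝ σ(a)σ(a⁻¹))`. -/
def peifferEquiv (rels : Set (FreeGroup X)) : Ups rels → Ups rels → Prop :=
  Relation.EqvGen fun x y => ∃ a : Sym X rels,
    y = x * sigma rels (FreeMonoid.of a * FreeMonoid.of a.symInv)

/-- The weak dominion of a submonoid `U` of a monoid `S`. -/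
def WDom (S : Type u) [Monoid S] (U : Submonoid S) : Set S :=
  {d | ∀ (G : Type u) [Group G] (f g : S →* G), (∀ u ∈ U, f u = g u) → f d = g d}

/-- The `F`-action on `𝒢(Υ)` determined by `ʷ(μσ(a)) = μσ(ʷa)`. -/
def actF (rels : Set (FreeGroup X)) (w : FreeGroup X) : GUps rels →* GUps rels :=
  PresentedGroup.toGroup (f := fun a => (PresentedGroup.of (Sym.conj w a) : GUps rels)) (by
    rintro x ⟨a, b, rfl⟩
    simp only [map_mul, map_inv, FreeGroup.lift_apply_of]
    have key : Sym.conj w (Sym.conj (Sym.theta a) b) =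
        Sym.conj (Sym.theta (Sym.conj w a)) (Sym.conj w b) := by
      rcases a with ⟨u, r, e⟩
      cases e <;> simp [Sym.conj, Sym.theta, mul_assoc]
    rw [key]
    have h2 : (QuotientGroup.mk (FreeGroup.of (Sym.conj w a) * FreeGroup.of (Sym.conj w b) *
        (FreeGroup.of (Sym.conj (Sym.theta (Sym.conj w a)) (Sym.conj w b)) *
          FreeGroup.of (Sym.conj w a))⁻¹) : GUps rels) = 1 :=
      (QuotientGroup.eq_one_iff _).2 (Subgroup.subset_normalClosure ⟨_, _, rfl⟩)
    rw [QuotientGroup.mk_mul, QuotientGroup.mk_inv, QuotientGroup.mk_mul,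
      QuotientGroup.mk_mul] at h2
    exact h2)



/-- Lift a monoid homomorphism from `Υ` to a group `G` through `𝒢(Υ)`. -/
def liftG {G : Type u} [Group G] (f : Ups rels →* G) : GUps rels →* G :=
  PresentedGroup.toGroup (f := fun a => f (sigma rels (FreeMonoid.of a))) (by
    rintro x ⟨a, b, rfl⟩
    simp only [map_mul, map_inv, FreeGroup.lift_apply_of]
    rw [mul_inv_eq_one, ← map_mul, ← map_mul, ← map_mul, ← map_mul]
    congr 1
    exact Con.eq _ |>.2 (ConGen.Rel.of _ _ ⟨a, b, rfl, rfl⟩))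

theorem liftG_comp_mu {G : Type u} [Group G] (f : Ups rels →* G) :
    (liftG f).comp (mu rels) = f := by
  apply MonoidHom.ext; intro x
  obtain ⟨w, rfl⟩ := (upsCon rels).mk'_surjective x
  have key : (((liftG f).comp (mu rels)).comp (sigma rels)) =
      f.comp (sigma rels) := by
    apply FreeMonoid.hom_eq
    intro a
    simp only [MonoidHom.comp_apply, sigma, mu, Con.lift_mk', FreeMonoid.lift_eval_of]
    exact PresentedGroup.toGroup.of _
  exact DFunLike.congr_fun key w

theorem thetaTilde_comp_mu :
    (thetaTilde rels).comp (mu rels) = thetaBar rels := by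
  apply MonoidHom.ext; intro x
  obtain ⟨w, rfl⟩ := (upsCon rels).mk'_surjective x
  have key : (((thetaTilde rels).comp (mu rels)).comp (sigma rels)) =
      (thetaBar rels).comp (sigma rels) := by
    apply FreeMonoid.hom_eq
    intro a
    simp only [MonoidHom.comp_apply, sigma, mu, thetaBar, Con.lift_mk',
      FreeMonoid.lift_eval_of]
    exact PresentedGroup.toGroup.of _
  exact DFunLike.congr_fun key w

/-- Part of (iii) ⇒ (i) of Theorem `wdom`: if `Π̃ = 𝔘̂`, then every identity
`Y`-sequence lies in the weak dominion of `𝔘`. -/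
theorem mem_WDom_of_ker_eq_UUhat (rels : Set (FreeGroup X))
    (h : (thetaTilde rels).ker = UUhat rels) :
    ∀ d ∈ MonoidHom.mker (thetaBar rels), d ∈ WDom (Ups rels) (UU rels) := by
  intro d hd G _ f g hfg
  have hmud : mu rels d ∈ UUhat rels := by
    rw [← h, MonoidHom.mem_ker, ← MonoidHom.comp_apply, thetaTilde_comp_mu]
    exact hd
  have key : mu rels d ∈ MonoidHom.eqLocus (liftG f) (liftG g) := by
    refine (Subgroup.closure_le _).2 ?_ hmud
    rintro _ ⟨u, hu, rfl⟩
    show liftG f (mu rels u) = liftG g (mu rels u)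
    rw [← MonoidHom.comp_apply, ← MonoidHom.comp_apply, liftG_comp_mu, liftG_comp_mu]
    exact hfg u hu
  calc f d = (liftG f) (mu rels d) := by rw [← MonoidHom.comp_apply, liftG_comp_mu]
    _ = (liftG g) (mu rels d) := key
    _ = g d := by rw [← MonoidHom.comp_apply, liftG_comp_mu]

end Wh
end

section
/- Every element of Π̃ = ker θ̃ is central in 𝒢(Υ); in particular Π̃ is an abelian subgroup of 𝒢(Υ). -/
universe u

namespace Wh

variable {X : Type u}

variable {rels : Set (FreeGroup X)}

lemma Sym.conj_one (b : Sym X rels) : Sym.conj 1 b = b := by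
  cases b; simp [Sym.conj]

lemma Sym.conj_conj (v w : FreeGroup X) (b : Sym X rels) :
    Sym.conj v (Sym.conj w b) = Sym.conj (v * w) b := by
  cases b; simp [Sym.conj, mul_assoc]

lemma thetaTilde_of (rels : Set (FreeGroup X)) (a : Sym X rels) :
    thetaTilde rels (PresentedGroup.of a) = Sym.theta a := by
  simp [thetaTilde, PresentedGroup.toGroup.of]

lemma grel_holds (rels : Set (FreeGroup X)) (a b : Sym X rels) :
    (PresentedGroup.of a : GUps rels) * PresentedGroup.of b =
      PresentedGroup.of (Sym.conj (Sym.theta a) b) * PresentedGroup.of a := by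
  have h2 : (QuotientGroup.mk (FreeGroup.of a * FreeGroup.of b *
      (FreeGroup.of (Sym.conj (Sym.theta a) b) * FreeGroup.of a)⁻¹) : GUps rels) = 1 :=
    (QuotientGroup.eq_one_iff _).2 (Subgroup.subset_normalClosure ⟨a, b, rfl⟩)
  rw [QuotientGroup.mk_mul, QuotientGroup.mk_inv, QuotientGroup.mk_mul,
    QuotientGroup.mk_mul, mul_inv_eq_one] at h2
  exact h2

lemma conj_of_gen (rels : Set (FreeGroup X)) (a b : Sym X rels) :
    (PresentedGroup.of a : GUps rels) * PresentedGroup.of b * (PresentedGroup.of a)⁻¹ =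
      PresentedGroup.of (Sym.conj (thetaTilde rels (PresentedGroup.of a)) b) := by
  rw [thetaTilde_of, mul_inv_eq_iff_eq_mul]
  exact grel_holds rels a b

lemma conj_of_inv_step (rels : Set (FreeGroup X)) (g : GUps rels)
    (ih : ∀ b : Sym X rels, g * PresentedGroup.of b * g⁻¹ =
      PresentedGroup.of (Sym.conj (thetaTilde rels g) b)) (b : Sym X rels) :
    g⁻¹ * PresentedGroup.of b * g⁻¹⁻¹ =
      PresentedGroup.of (Sym.conj (thetaTilde rels g⁻¹) b) := by
  have key := ih (Sym.conj (thetaTilde rels g)⁻¹ b)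
  rw [Sym.conj_conj, mul_inv_cancel, Sym.conj_one] at key
  rw [map_inv]
  rw [← key]
  group

lemma conj_of_mul_step (rels : Set (FreeGroup X)) (g h : GUps rels)
    (ihg : ∀ b : Sym X rels, g * PresentedGroup.of b * g⁻¹ =
      PresentedGroup.of (Sym.conj (thetaTilde rels g) b))
    (ihh : ∀ b : Sym X rels, h * PresentedGroup.of b * h⁻¹ =
      PresentedGroup.of (Sym.conj (thetaTilde rels h) b)) (b : Sym X rels) :
    (g * h) * PresentedGroup.of b * (g * h)⁻¹ =
      PresentedGroup.of (Sym.conj (thetaTilde rels (g * h)) b) := by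
  rw [map_mul, ← Sym.conj_conj, ← ihg, ← ihh]
  group

lemma conj_of_eq (rels : Set (FreeGroup X)) (g : GUps rels) (b : Sym X rels) :
    g * PresentedGroup.of b * g⁻¹ = PresentedGroup.of (Sym.conj (thetaTilde rels g) b) := by
  induction g using QuotientGroup.induction_on with
  | H w =>
    induction w using FreeGroup.induction_on generalizing b with
    | C1 =>
      change (1 : GUps rels) * PresentedGroup.of b * (1 : GUps rels)⁻¹ =
        PresentedGroup.of (Sym.conj (thetaTilde rels 1) b)
      simp only [QuotientGroup.mk_one, one_mul, inv_one, mul_one, map_one, Sym.conj_one]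
    | of a => exact conj_of_gen rels a b
    | inv_of a ih =>
      rw [QuotientGroup.mk_inv]
      exact conj_of_inv_step rels _ ih b
    | mul x y ihx ihy =>
      rw [QuotientGroup.mk_mul]
      exact conj_of_mul_step rels _ _ ihx ihy b

/-- Every element of `Π̃ = ker θ̃` is central in `𝒢(Υ)`; in particular `Π̃` is an
abelian subgroup of `𝒢(Υ)`. -/
theorem ker_thetaTilde_central (rels : Set (FreeGroup X)) :
    (∀ d ∈ (thetaTilde rels).ker, ∀ x : GUps rels, d * x = x * d) ∧
    (∀ d ∈ (thetaTilde rels).ker, ∀ d' ∈ (thetaTilde rels).ker, d * d' = d' * d) := by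
  have central : ∀ d ∈ (thetaTilde rels).ker, ∀ x : GUps rels, d * x = x * d := by
    intro d hd x
    have hker : thetaTilde rels d = 1 := hd
    have hcomm : ∀ b : Sym X rels, d * PresentedGroup.of b = PresentedGroup.of b * d := by
      intro b
      have := conj_of_eq rels d b
      rw [hker, Sym.conj_one, mul_inv_eq_iff_eq_mul] at this
      exact this
    induction x using QuotientGroup.induction_on with
    | H w =>
      induction w using FreeGroup.induction_on with
      | C1 =>
        change d * (1 : GUps rels) = (1 : GUps rels) * d
        simp
      | of a => exact hcomm a
      | inv_of a ih =>
        rw [QuotientGroup.mk_inv]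
        exact (Commute.inv_right ih : _)
      | mul x y ihx ihy =>
        rw [QuotientGroup.mk_mul]
        exact (Commute.mul_right ihx ihy : _)
  exact ⟨central, fun d hd d' hd' => central d hd d'⟩

end Wh
end
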